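/- Suppose Y = r(X) + ε where the error ε is independent of the covariate X, responses are missing at random (the conditional expectation of δ given (X, Y) equals π(X) for a measurable function π of X alone), and P(δ = 1) > 0. Then the conditional distribution of ε given δ = 1 equals the unconditional distribution of ε; in particular, if E[ε²] < ∞ then E[ε | δ = 1] = E[ε] and Var(ε | δ = 1) = Var(ε). -/

import Mathlib

open MeasureTheory ProbabilityTheory

/-- In the nonparametric regression model `Y = r(X) + ε` with `ε`
independent of `X` and responses missing at random, with `P(δ = 1) > 0`, the conditional
distribution of `ε` given `δ = 1` equals the unconditional distribution of `ε`; in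
particular, if `E[ε²] < ∞` then `E[ε | δ = 1] = E[ε]` and `Var(ε | δ = 1) = Var(ε)`. -/
theorem error_dist_cond_complete_cases_of_MAR
    {Ω : Type*} [MeasurableSpace Ω] (μ : Measure Ω) [IsProbabilityMeasure μ]
    {m : ℕ} (X : Ω → (Fin m → ℝ)) (ε : Ω → ℝ) (δ : Ω → ℝ) (Y : Ω → ℝ)
    (r : (Fin m → ℝ) → ℝ) (π : (Fin m → ℝ) → ℝ)
    (hX : Measurable X) (hε : Measurable ε) (hδ : Measurable δ)
    (hr : Measurable r) (hπ : Measurable π)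
    (hδ01 : ∀ ω, δ ω = 0 ∨ δ ω = 1)
    (hY : ∀ ω, Y ω = r (X ω) + ε ω)
    (hindep : IndepFun ε X μ)
    (hMAR : MeasureTheory.condExp
        (MeasurableSpace.comap (fun ω => (X ω, Y ω)) inferInstance) μ δ
        =ᵐ[μ] fun ω => π (X ω))
    (hp : 0 < μ {ω | δ ω = 1}) :
    (ProbabilityTheory.cond μ {ω | δ ω = 1}).map ε = μ.map ε ∧
      (Integrable (fun ω => ε ω ^ 2) μ →
        (∫ ω, ε ω ∂(ProbabilityTheory.cond μ {ω | δ ω = 1}) = ∫ ω, ε ω ∂μ) ∧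
          variance ε (ProbabilityTheory.cond μ {ω | δ ω = 1}) = variance ε μ) := by
  set s : Set Ω := {ω | δ ω = 1} with hs_def
  have hs : MeasurableSet s := hδ (measurableSet_singleton 1)
  have hYm : Measurable Y := by
    have : Y = fun ω => r (X ω) + ε ω := funext hY
    rw [this]; exact (hr.comp hX).add hε
  -- equality of the two σ-algebras
  have key : MeasurableSpace.comap (fun ω => (X ω, Y ω)) inferInstance
      = MeasurableSpace.comap (fun ω => (X ω, ε ω)) inferInstance := by
    apply le_antisymm
    · have h1 : (fun ω => (X ω, Y ω))
          = (fun p : (Fin m → ℝ) × ℝ => (p.1, r p.1 + p.2)) ∘ (fun ω => (X ω, ε ω)) := by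
        funext ω; simp [Function.comp, hY ω]
      rw [h1, ← MeasurableSpace.comap_comp]
      exact MeasurableSpace.comap_mono
        (Measurable.comap_le (measurable_fst.prodMk ((hr.comp measurable_fst).add measurable_snd)))
    · have h2 : (fun ω => (X ω, ε ω))
          = (fun p : (Fin m → ℝ) × ℝ => (p.1, p.2 - r p.1)) ∘ (fun ω => (X ω, Y ω)) := by
        funext ω; simp [Function.comp, hY ω]
      rw [h2, ← MeasurableSpace.comap_comp]
      exact MeasurableSpace.comap_mono
        (Measurable.comap_le (measurable_fst.prodMk (measurable_snd.sub (hr.comp measurable_fst))))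
  rw [key] at hMAR
  have hle : MeasurableSpace.comap (fun ω => (X ω, ε ω)) inferInstance ≤ ‹MeasurableSpace Ω› :=
    Measurable.comap_le (hX.prodMk hε)
  haveI : SigmaFinite (μ.trim hle) := by
    haveI : IsFiniteMeasure (μ.trim hle) := isFiniteMeasure_trim hle
    infer_instance
  have hδint : Integrable δ μ := by
    refine Integrable.mono' (integrable_const 1) hδ.aestronglyMeasurable
      (ae_of_all _ fun ω => ?_)
    rcases hδ01 ω with h | h <;> simp [h]
  have hδeq : δ = s.indicator (1 : Ω → ℝ) := by
    funext ω
    rcases hδ01 ω with h | h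
    · have hns : ω ∉ s := by simp [hs_def, h]
      simp [Set.indicator_of_notMem hns, h]
    · have hms : ω ∈ s := h
      simp [Set.indicator_of_mem hms, h]
  -- ∫ π∘X = μ s
  have hπint : Integrable (fun ω => π (X ω)) μ :=
    (integrable_condExp).congr hMAR
  have hπmean : ∫ ω, π (X ω) ∂μ = (μ s).toReal := by
    rw [← integral_congr_ae hMAR, integral_condExp hle, hδeq, integral_indicator_one hs, measureReal_def]
  -- main product formula
  have main : ∀ B : Set ℝ, MeasurableSet B → μ (ε ⁻¹' B ∩ s) = μ s * μ (ε ⁻¹' B) := by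
    intro B hB
    have hsB : MeasurableSet[MeasurableSpace.comap (fun ω => (X ω, ε ω)) inferInstance]
        (ε ⁻¹' B) := by
      refine ⟨Set.univ ×ˢ B, MeasurableSet.univ.prod hB, ?_⟩
      ext ω; simp
    have h1 : ∫ ω in ε ⁻¹' B, δ ω ∂μ = ∫ ω in ε ⁻¹' B, π (X ω) ∂μ := by
      rw [← setIntegral_condExp hle hδint hsB]
      exact setIntegral_congr_ae (hle _ hsB) (hMAR.mono fun ω h _ => h)
    -- LHS
    have hL : ∫ ω in ε ⁻¹' B, δ ω ∂μ = (μ (s ∩ ε ⁻¹' B)).toReal := by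
      rw [hδeq, integral_indicator_one hs, measureReal_def, Measure.restrict_apply hs]
    -- RHS via independence
    have hfind : (fun ω => Set.indicator (ε ⁻¹' B) (1 : Ω → ℝ) ω)
        = fun ω => Set.indicator B (1 : ℝ → ℝ) (ε ω) := by
      funext ω; by_cases h : ε ω ∈ B <;> simp [h]
    have hind2 : IndepFun (fun ω => Set.indicator B (1 : ℝ → ℝ) (ε ω))
        (fun ω => π (X ω)) μ :=
      hindep.comp (measurable_one.indicator hB) hπ
    have hR : ∫ ω in ε ⁻¹' B, π (X ω) ∂μ
        = (μ (ε ⁻¹' B)).toReal * (μ s).toReal := by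
      have hsplit : ∫ ω in ε ⁻¹' B, π (X ω) ∂μ
          = ∫ ω, Set.indicator B (1 : ℝ → ℝ) (ε ω) * π (X ω) ∂μ := by
        rw [← integral_indicator (hε hB)]
        congr 1
        funext ω
        by_cases h : ε ω ∈ B
        · simp [Set.indicator_of_mem, h]
        · simp [Set.indicator_of_notMem, h]
      rw [hsplit]
      have hmul : ∫ ω, Set.indicator B (1 : ℝ → ℝ) (ε ω) * π (X ω) ∂μ
          = (∫ ω, Set.indicator B (1 : ℝ → ℝ) (ε ω) ∂μ) * ∫ ω, π (X ω) ∂μ :=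
        hind2.integral_fun_mul_eq_mul_integral
          ((measurable_one.indicator hB).comp hε).aestronglyMeasurable
          (hπ.comp hX).aestronglyMeasurable
      rw [hmul, hπmean, ← hfind, integral_indicator_one (hε hB), measureReal_def]
    have hreal : (μ (s ∩ ε ⁻¹' B)).toReal = (μ s).toReal * (μ (ε ⁻¹' B)).toReal := by
      rw [← hL, h1, hR]; ring
    have : μ (s ∩ ε ⁻¹' B) = μ s * μ (ε ⁻¹' B) := by
      rw [← ENNReal.toReal_eq_toReal_iff' (measure_ne_top _ _)
        (ENNReal.mul_ne_top (measure_ne_top _ _) (measure_ne_top _ _)), ENNReal.toReal_mul]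
      exact hreal
    rw [Set.inter_comm] at this
    exact this
  -- conditional measure equality on preimages
  have hcond : ∀ B : Set ℝ, MeasurableSet B → (μ[|s]) (ε ⁻¹' B) = μ (ε ⁻¹' B) := by
    intro B hB
    rw [cond_apply hs, Set.inter_comm, main B hB, ← mul_assoc,
      ENNReal.inv_mul_cancel hp.ne' (measure_ne_top _ _), one_mul]
  have hmap : (μ[|s]).map ε = μ.map ε := by
    ext B hB
    rw [Measure.map_apply hε hB, Measure.map_apply hε hB, hcond B hB]
  haveI : IsProbabilityMeasure (μ[|s]) := cond_isProbabilityMeasure hp.ne'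
  have hint : ∫ ω, ε ω ∂(μ[|s]) = ∫ ω, ε ω ∂μ := by
    have e1 : ∫ ω, ε ω ∂(μ[|s]) = ∫ x, id x ∂((μ[|s]).map ε) :=
      (integral_map hε.aemeasurable aestronglyMeasurable_id).symm
    have e2 : ∫ ω, ε ω ∂μ = ∫ x, id x ∂(μ.map ε) :=
      (integral_map hε.aemeasurable aestronglyMeasurable_id).symm
    rw [e1, e2, hmap]
  refine ⟨hmap, fun _ => ⟨hint, ?_⟩⟩
  -- variance equality
  have hev : evariance ε (μ[|s]) = evariance ε μ := by
    unfold evariance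
    rw [hint]
    set c : ℝ := ∫ ω, ε ω ∂μ
    have hg : Measurable fun x : ℝ => ‖x - c‖ₑ ^ 2 :=
      ((measurable_id.sub measurable_const).enorm).pow_const 2
    rw [← lintegral_map hg hε, ← lintegral_map hg hε, hmap]
  rw [variance, variance, hev]
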